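/- Let λ, λ' > 0 and ε, ε' ≥ 0. Suppose β ∈ ℝ^p is an ε-solution for λ and β' ∈ ℝ^p is an ε'-solution for λ', with P_λ(β) and P_{λ'}(β') finite. Then (1 − λ'/λ)(f(Xβ') − f(Xβ)) ≤ ε' + (λ'/λ)ε. -/

import Mathlib

open scoped RealInnerProductSpace

noncomputable section

abbrev Vec (d : ℕ) := EuclideanSpace ℝ (Fin d)

/-- Matrix–vector product, landing in Euclidean space. -/
def mv {a b : ℕ} (M : Matrix (Fin a) (Fin b) ℝ) (v : Vec b) : Vec a := WithLp.toLp 2 (M.mulVec v)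

/-- Primal objective `P_λ(β) = f(Xβ) + λ Ω(β)`, with values in `EReal`. -/
noncomputable def Pfun {n p : ℕ} (X : Matrix (Fin n) (Fin p) ℝ)
    (f : Vec n → ℝ) (Ω : Vec p → EReal) (lam : ℝ) (b : Vec p) : EReal :=
  ((f (mv X b) : ℝ) : EReal) + ((lam : ℝ) : EReal) * Ω b

/-- `β` is an `ε`-solution for `λ`: `P_λ(β) - inf P_λ ≤ ε`. -/
noncomputable def epsSolution {n p : ℕ} (X : Matrix (Fin n) (Fin p) ℝ)
    (f : Vec n → ℝ) (Ω : Vec p → EReal) (lam ε : ℝ) (β : Vec p) : Prop :=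
  Pfun X f Ω lam β - (⨅ b, Pfun X f Ω lam b) ≤ (ε : EReal)

/-- If `P_λ(β)` is finite and `λ > 0`, then `Ω β` is a real number. -/
lemma omega_real {n p : ℕ} (X : Matrix (Fin n) (Fin p) ℝ)
    (f : Vec n → ℝ) (Ω : Vec p → EReal) (lam : ℝ) (hlam : 0 < lam)
    (β : Vec p) (r : ℝ) (hr : Pfun X f Ω lam β = (r : EReal)) :
    ∃ a : ℝ, Ω β = (a : EReal) := by
  unfold Pfun at hr
  have hnt : Ω β ≠ ⊤ := by
    intro h
    rw [h, EReal.coe_mul_top_of_pos hlam, EReal.coe_add_top] at hr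
    exact absurd hr (by simp)
  have hnb : Ω β ≠ ⊥ := by
    intro h
    rw [h, EReal.coe_mul_bot_of_pos hlam, EReal.add_bot] at hr
    exact absurd hr (by simp)
  exact ⟨(Ω β).toReal, (EReal.coe_toReal hnt hnb).symm⟩

/-- Lemma: variation of the loss along the path.
If `β` is an `ε`-solution for `λ` and `β'` an `ε'`-solution for `λ'`, with
`P_λ(β)` and `P_{λ'}(β')` finite, then
`(1 - λ'/λ)(f(Xβ') - f(Xβ)) ≤ ε' + (λ'/λ) ε`. -/
theorem stmt7 {n p : ℕ} (X : Matrix (Fin n) (Fin p) ℝ)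
    (f : Vec n → ℝ) (hconv : ConvexOn ℝ Set.univ f)
    (Ω : Vec p → EReal)
    (lam lam' : ℝ) (hlam : 0 < lam) (hlam' : 0 < lam')
    (ε ε' : ℝ) (hε : 0 ≤ ε) (hε' : 0 ≤ ε')
    (β β' : Vec p)
    (hβ : epsSolution X f Ω lam ε β)
    (hβ' : epsSolution X f Ω lam' ε' β')
    (hfin : ∃ r : ℝ, Pfun X f Ω lam β = (r : EReal))
    (hfin' : ∃ r : ℝ, Pfun X f Ω lam' β' = (r : EReal)) :
    (1 - lam' / lam) * (f (mv X β') - f (mv X β)) ≤ ε' + (lam' / lam) * ε := by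
  obtain ⟨r, hr⟩ := hfin
  obtain ⟨r', hr'⟩ := hfin'
  obtain ⟨a, ha⟩ := omega_real X f Ω lam hlam β r hr
  obtain ⟨a', ha'⟩ := omega_real X f Ω lam' hlam' β' r' hr'
  set F := f (mv X β) with hF
  set F' := f (mv X β') with hF'
  -- real-valued equations
  have hre : F + lam * a = r := by
    have := hr
    rw [Pfun, ha, ← EReal.coe_mul, ← EReal.coe_add] at this
    exact_mod_cast this
  have hre' : F' + lam' * a' = r' := by
    have := hr'
    rw [Pfun, ha', ← EReal.coe_mul, ← EReal.coe_add] at this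
    exact_mod_cast this
  -- values of the two objectives at the other point
  have hPval : Pfun X f Ω lam β' = ((F' + lam * a' : ℝ) : EReal) := by
    rw [Pfun, ha', ← EReal.coe_mul, ← EReal.coe_add]
  have hPval' : Pfun X f Ω lam' β = ((F + lam' * a : ℝ) : EReal) := by
    rw [Pfun, ha, ← EReal.coe_mul, ← EReal.coe_add]
  -- key real inequalities from the two eps-solution hypotheses
  have key : ∀ (l e : ℝ) (b1 b2 : Vec p) (s v : ℝ),
      Pfun X f Ω l b1 - (⨅ b, Pfun X f Ω l b) ≤ (e : EReal) →
      Pfun X f Ω l b1 = (s : EReal) → Pfun X f Ω l b2 = (v : EReal) →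
      s ≤ v + e := by
    intro l e b1 b2 s v hsol hs hv
    set m := ⨅ b, Pfun X f Ω l b with hm
    have hmle : m ≤ (v : EReal) := hv ▸ iInf_le _ b2
    have hmne : m ≠ ⊥ := by
      intro hbot
      rw [hs, hbot, EReal.coe_sub_bot] at hsol
      exact absurd hsol (by simp)
    have hmnt : m ≠ ⊤ := fun htop => by simp [htop] at hmle
    lift m to ℝ using ⟨hmnt, hmne⟩ with μ
    rw [hs, ← EReal.coe_sub] at hsol
    have h1 : s - μ ≤ e := by exact_mod_cast hsol
    have h2 : μ ≤ v := by exact_mod_cast hmle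
    linarith
  have I1 : r ≤ (F' + lam * a') + ε := key lam ε β β' r _ hβ hr hPval
  have I2 : r' ≤ (F + lam' * a) + ε' := key lam' ε' β' β r' _ hβ' hr' hPval'
  have hl : lam' / lam > 0 := div_pos hlam' hlam
  have main : (lam - lam') * (F' - F) ≤ lam * ε' + lam' * ε := by nlinarith [I1, I2, hlam'.le, hlam.le]
  have hc : lam' / lam * lam = lam' := div_mul_cancel₀ _ hlam.ne'
  have heq : (1 - lam' / lam) * (F' - F) = ((lam - lam') * (F' - F)) / lam := by
    field_simp
  rw [heq, div_le_iff₀ hlam]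
  nlinarith [main, hc]
end
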